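/- For any two points c₁, c₂ in the hyperbolic plane ℍ there exists a partition ℍ = A₁ ∪ A₂ into two Borel sets such that neither A₁ nor A₂ contains an unbounded subset S with f_{c_i}(S) = S for i ∈ {1,2}, where f_{c_i} are the point reflections at c₁ and c₂. -/

import Mathlib

open UpperHalfPlane Set

open Real

set_option maxHeartbeats 2000000

noncomputable section

namespace PtRefl

lemma distC_sq (x y : ℂ) : dist x y ^ 2 = (x.re - y.re) ^ 2 + (x.im - y.im) ^ 2 := by
  rw [Complex.dist_eq_re_im, Real.sq_sqrt (by positivity)]

/-- The explicit point reflection of `ℍ` at `c`. -/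
def refl (c z : ℍ) : ℍ :=
  UpperHalfPlane.mk
    ⟨c.re - c.im ^ 2 * (z.re - c.re) / ((z.re - c.re) ^ 2 + z.im ^ 2),
     c.im ^ 2 * z.im / ((z.re - c.re) ^ 2 + z.im ^ 2)⟩
    (by
      have h1 := z.im_pos
      have h2 := c.im_pos
      show 0 < c.im ^ 2 * z.im / ((z.re - c.re) ^ 2 + z.im ^ 2)
      positivity)

lemma refl_re (c z : ℍ) :
    (refl c z).re = c.re - c.im ^ 2 * (z.re - c.re) / ((z.re - c.re) ^ 2 + z.im ^ 2) := rfl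

lemma refl_im (c z : ℍ) :
    (refl c z).im = c.im ^ 2 * z.im / ((z.re - c.re) ^ 2 + z.im ^ 2) := rfl

lemma refl_self (c : ℍ) : refl c c = c := by
  have hb := c.im_pos
  apply UpperHalfPlane.ext'
  · rw [refl_re]; field_simp; ring
  · rw [refl_im]; field_simp; ring

lemma dist_refl_center (c z : ℍ) : dist c (refl c z) = dist c z := by
  have hb := c.im_pos
  have hq := z.im_pos
  have hD : (0:ℝ) < (z.re - c.re) ^ 2 + z.im ^ 2 := by positivity
  rw [UpperHalfPlane.dist_eq_iff_eq_sq_sinh dist_nonneg]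
  have h0 : dist ((c:ℂ)) ((z:ℂ)) ^ 2 / (4 * c.im * z.im) = Real.sinh (dist c z / 2) ^ 2 :=
    (UpperHalfPlane.dist_eq_iff_eq_sq_sinh dist_nonneg).mp rfl
  rw [← h0, distC_sq, distC_sq]
  simp only [coe_re, coe_im, refl_re, refl_im]
  have hrim : (0:ℝ) < c.im ^ 2 * z.im / ((z.re - c.re) ^ 2 + z.im ^ 2) := by positivity
  field_simp
  ring

lemma dist_refl_double (c z : ℍ) : dist z (refl c z) = 2 * dist z c := by
  have hb := c.im_pos
  have hq := z.im_pos
  have hD : (0:ℝ) < (z.re - c.re) ^ 2 + z.im ^ 2 := by positivity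
  rw [UpperHalfPlane.dist_eq_iff_eq_sq_sinh (by positivity : (0:ℝ) ≤ 2 * dist z c)]
  have h2 : (2 * dist z c) / 2 = dist z c := by ring
  rw [h2, Real.sinh_sq]
  have hc := UpperHalfPlane.cosh_dist z c
  rw [hc, distC_sq, distC_sq]
  simp only [coe_re, coe_im, refl_re, refl_im]
  have hrim : (0:ℝ) < c.im ^ 2 * z.im / ((z.re - c.re) ^ 2 + z.im ^ 2) := by positivity
  field_simp
  ring

/-- Euclidean distance between the Euclidean centers of two hyperbolic circles of
radii `s` around `x` and `y`, when `dist x y = 2 * s`: external tangency. -/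
lemma dist_centers_tangent (x y : ℍ) (s : ℝ) (hs : 0 ≤ s) (h : dist x y = 2 * s) :
    dist ((x.center s : ℍ) : ℂ) ((y.center s : ℍ) : ℂ) = (x.im + y.im) * Real.sinh s := by
  have hc : Real.cosh s ^ 2 + Real.sinh s ^ 2
      = 1 + ((x.re - y.re) ^ 2 + (x.im - y.im) ^ 2) / (2 * x.im * y.im) := by
    rw [← Real.cosh_two_mul, ← h, UpperHalfPlane.cosh_dist, distC_sq]
    simp only [coe_re, coe_im]
  have hs2 := Real.sinh_sq s
  have hxi := x.im_pos
  have hyi := y.im_pos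
  have hsq : dist ((x.center s : ℍ) : ℂ) ((y.center s : ℍ) : ℂ) ^ 2
      = ((x.im + y.im) * Real.sinh s) ^ 2 := by
    rw [distC_sq]
    simp only [coe_re, coe_im, center_re, center_im]
    have hc' : (Real.cosh s ^ 2 + Real.sinh s ^ 2) * (2 * x.im * y.im)
        = (1 + ((x.re - y.re) ^ 2 + (x.im - y.im) ^ 2) / (2 * x.im * y.im)) * (2 * x.im * y.im) := by
      rw [hc]
    field_simp at hc'
    linear_combination (-1 : ℝ) * hc' + (-(x.im^2+y.im^2)) * hs2
  have hrhs : 0 ≤ (x.im + y.im) * Real.sinh s :=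
    mul_nonneg (by positivity) (Real.sinh_nonneg_iff.mpr hs)
  exact (sq_eq_sq₀ dist_nonneg hrhs).mp hsq
lemma radius_lt (c x : ℍ) (r : ℝ) (hr : 0 < r) (h : dist c x = r) :
    c.im * Real.sinh r < x.im * Real.sinh (2 * r) := by
  have h1 : c.im ≤ x.im * Real.exp (dist c x) := UpperHalfPlane.im_le_im_mul_exp_dist c x
  rw [h] at h1
  have hS : 0 < Real.sinh r := Real.sinh_pos_iff.mpr hr
  have h2 : Real.exp r < 2 * Real.cosh r := by
    have := Real.cosh_sub_sinh r
    have h3 : Real.sinh r ≤ Real.cosh r := by nlinarith [Real.exp_pos (-r)]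
    nlinarith [Real.sinh_add_cosh r, Real.exp_pos (-r)]
  rw [Real.sinh_two_mul]
  have hxi := x.im_pos
  have k1 : c.im * Real.sinh r ≤ x.im * Real.exp r * Real.sinh r :=
    mul_le_mul_of_nonneg_right h1 hS.le
  have k2 : x.im * Real.exp r * Real.sinh r < x.im * (2 * Real.cosh r) * Real.sinh r := by
    have := mul_lt_mul_of_pos_left h2 hxi
    exact mul_lt_mul_of_pos_right this hS
  calc c.im * Real.sinh r ≤ x.im * Real.exp r * Real.sinh r := k1
    _ < x.im * (2 * Real.cosh r) * Real.sinh r := k2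
    _ = x.im * (2 * Real.sinh r * Real.cosh r) := by ring

/-- internal tangency of the circles around `c` (radius `r`) and `x` (radius `2r`),
when `dist c x = r`. -/
lemma dist_centers_tangent' (c x : ℍ) (r : ℝ) (hr : 0 < r) (h : dist c x = r) :
    dist ((c.center r : ℍ) : ℂ) ((x.center (2*r) : ℍ) : ℂ)
      = x.im * Real.sinh (2*r) - c.im * Real.sinh r := by
  have hc : Real.cosh r
      = 1 + ((c.re - x.re) ^ 2 + (c.im - x.im) ^ 2) / (2 * c.im * x.im) := by
    rw [← h, UpperHalfPlane.cosh_dist, distC_sq]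
    simp only [coe_re, coe_im]
  have hs2 := Real.sinh_sq r
  have hci := c.im_pos
  have hxi := x.im_pos
  have hsq : dist ((c.center r : ℍ) : ℂ) ((x.center (2*r) : ℍ) : ℂ) ^ 2
      = (x.im * Real.sinh (2*r) - c.im * Real.sinh r) ^ 2 := by
    rw [distC_sq]
    simp only [coe_re, coe_im, center_re, center_im]
    rw [Real.cosh_two_mul, Real.sinh_two_mul]
    have hc' : Real.cosh r * (2 * c.im * x.im)
        = (1 + ((c.re - x.re) ^ 2 + (c.im - x.im) ^ 2) / (2 * c.im * x.im)) * (2 * c.im * x.im) := by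
      rw [hc]
    field_simp at hc'
    linear_combination (-1 : ℝ) * hc' + (x.im^2 * Real.sinh r^2 - x.im^2 * Real.cosh r^2
      - x.im^2 + 2*c.im*x.im*Real.cosh r - c.im^2) * hs2
  have hrhs : 0 ≤ x.im * Real.sinh (2*r) - c.im * Real.sinh r :=
    (sub_nonneg.mpr (radius_lt c x r hr h).le)
  exact (sq_eq_sq₀ dist_nonneg hrhs).mp hsq

lemma exists_midpoint (x y : ℍ) :
    ∃ m : ℍ, dist x m = dist x y / 2 ∧ dist m y = dist x y / 2 := by
  rcases eq_or_ne x y with rfl | hne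
  · exact ⟨x, by simp⟩
  · have hd0 : 0 < dist x y := dist_pos.mpr hne
    set s : ℝ := dist x y / 2 with hs_def
    have hs : 0 < s := by positivity
    have hd : dist x y = 2 * s := by rw [hs_def]; ring
    have htan := dist_centers_tangent x y s hs.le hd
    set A : ℂ := ((x.center s : ℍ) : ℂ) with hA
    set B : ℂ := ((y.center s : ℍ) : ℂ) with hB
    have hsum : 0 < x.im + y.im := by positivity
    set t : ℝ := x.im / (x.im + y.im) with ht_def
    have hS : 0 < Real.sinh s := Real.sinh_pos_iff.mpr hs
    set mC : ℂ := A + (t:ℂ) * (B - A) with hmC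
    have hAim : A.im = x.im * Real.cosh s := by rw [hA, coe_im, center_im]
    have hBim : B.im = y.im * Real.cosh s := by rw [hB, coe_im, center_im]
    have hcosh : 0 < Real.cosh s := Real.cosh_pos s
    have ht0 : 0 ≤ t := by positivity
    have hx' := x.im_pos
    have hy' := y.im_pos
    have ht1 : t ≤ 1 := by rw [ht_def, div_le_one hsum]; linarith
    have hmim : 0 < mC.im := by
      have h1 : mC.im = (1-t) * A.im + t * B.im := by
        rw [hmC]
        simp only [Complex.add_im, Complex.mul_im, Complex.sub_im, Complex.sub_re,
          Complex.ofReal_re, Complex.ofReal_im]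
        ring
      have ht1' : 0 < t := by rw [ht_def]; positivity
      rw [h1, hAim, hBim]
      have k1 := mul_pos ht1' (mul_pos hy' hcosh)
      have k2 := mul_nonneg (sub_nonneg.mpr ht1) (le_of_lt (mul_pos hx' hcosh))
      linarith
    set m : ℍ := UpperHalfPlane.mk mC hmim with hm
    have hmcoe : (m : ℂ) = mC := rfl
    have hBA : dist B A = (x.im + y.im) * Real.sinh s := by rw [dist_comm]; exact htan
    have hd1 : dist (m:ℂ) A = x.im * Real.sinh s := by
      rw [hmcoe, hmC, dist_eq_norm]
      have e1 : A + (t:ℂ) * (B - A) - A = (t:ℂ) * (B - A) := by ring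
      rw [e1, norm_mul, Complex.norm_real, Real.norm_eq_abs, abs_of_nonneg ht0,
        ← dist_eq_norm, hBA, ht_def]
      field_simp
    have hd2 : dist (m:ℂ) B = y.im * Real.sinh s := by
      rw [hmcoe, hmC, dist_eq_norm]
      have e1 : A + (t:ℂ) * (B - A) - B = ((1 - t : ℝ):ℂ) * (A - B) := by
        push_cast; ring
      rw [e1, norm_mul, Complex.norm_real, Real.norm_eq_abs, abs_of_nonneg (by linarith),
        ← dist_eq_norm, htan, ht_def]
      field_simp
      ring
    refine ⟨m, ?_, ?_⟩
    · rw [dist_comm, UpperHalfPlane.dist_eq_iff_dist_coe_center_eq]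
      exact hd1
    · rw [UpperHalfPlane.dist_eq_iff_dist_coe_center_eq]
      exact hd2

lemma midpoint_unique {x y : ℍ} (hne : x ≠ y) {m₁ m₂ : ℍ}
    (h1x : dist x m₁ = dist x y / 2) (h1y : dist m₁ y = dist x y / 2)
    (h2x : dist x m₂ = dist x y / 2) (h2y : dist m₂ y = dist x y / 2) : m₁ = m₂ := by
  have hd0 : 0 < dist x y := dist_pos.mpr hne
  set s : ℝ := dist x y / 2 with hs_def
  have hs : 0 < s := by positivity
  have hd : dist x y = 2 * s := by rw [hs_def]; ring
  have htan := dist_centers_tangent x y s hs.le hd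
  set A : ℂ := ((x.center s : ℍ) : ℂ) with hA
  set B : ℂ := ((y.center s : ℍ) : ℂ) with hB
  have hS : 0 < Real.sinh s := Real.sinh_pos_iff.mpr hs
  have hx' := x.im_pos
  have hy' := y.im_pos
  have hAB : 0 < dist A B := by rw [htan]; positivity
  have key : ∀ m : ℍ, dist x m = s → dist m y = s → (m : ℂ) =
      AffineMap.lineMap A B (x.im / (x.im + y.im) : ℝ) := by
    intro m hmx hmy
    have hmA : dist (m:ℂ) A = x.im * Real.sinh s := by
      rw [← UpperHalfPlane.dist_eq_iff_dist_coe_center_eq, dist_comm]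
      exact hmx
    have hmB : dist (m:ℂ) B = y.im * Real.sinh s := by
      rw [← UpperHalfPlane.dist_eq_iff_dist_coe_center_eq]
      exact hmy
    have hsum : dist A (m:ℂ) + dist (m:ℂ) B = dist A B := by
      rw [dist_comm A, hmA, hmB, htan]; ring
    obtain ⟨t, htI, hlin⟩ := dist_add_dist_eq_iff.mp hsum
    have hdl : dist (AffineMap.lineMap A B t) A = ‖t‖ * dist A B := dist_lineMap_left A B t
    rw [hlin, hmA] at hdl
    have habs : ‖t‖ = t := by rw [Real.norm_eq_abs, abs_of_nonneg htI.1]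
    rw [habs, htan] at hdl
    have h0 : (x.im - t * (x.im + y.im)) * Real.sinh s = 0 := by linear_combination hdl
    have ht : t = x.im / (x.im + y.im) := by
      rcases mul_eq_zero.mp h0 with h | h
      · rw [eq_div_iff (by positivity : (x.im + y.im) ≠ 0)]; linarith
      · exact absurd h (ne_of_gt hS)
    rw [← hlin, ht]
  have e1 := key m₁ h1x h1y
  have e2 := key m₂ h2x h2y
  exact UpperHalfPlane.ext (e1.trans e2.symm)

lemma eq_refl_of_dists {c x y : ℍ} (hx : x ≠ c)
    (h1 : dist c y = dist c x) (h2 : dist x y = 2 * dist c x) : y = refl c x := by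
  set r : ℝ := dist c x with hr_def
  have hr : 0 < r := dist_pos.mpr (Ne.symm hx)
  have htan := dist_centers_tangent' c x r hr rfl
  set A : ℂ := ((c.center r : ℍ) : ℂ) with hA
  set B : ℂ := ((x.center (2*r) : ℍ) : ℂ) with hB
  set ρc : ℝ := c.im * Real.sinh r with hρc_def
  set ρx : ℝ := x.im * Real.sinh (2*r) with hρx_def
  have hS : 0 < Real.sinh r := Real.sinh_pos_iff.mpr hr
  have hρc : 0 < ρc := mul_pos c.im_pos hS
  have hlt : ρc < ρx := radius_lt c x r hr rfl
  have hρx : 0 < ρx := lt_trans hρc hlt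
  set t : ℝ := ρc / ρx with ht_def
  have ht0 : 0 < t := by positivity
  have ht1 : t < 1 := (div_lt_one hρx).mpr hlt
  have key : ∀ w : ℍ, dist c w = r → dist x w = 2 * r →
      ((1 - t : ℝ):ℂ) * (w : ℂ) = A - ((t:ℝ):ℂ) * B := by
    intro w hw1 hw2
    have hwA : dist (w:ℂ) A = ρc := by
      rw [← UpperHalfPlane.dist_eq_iff_dist_coe_center_eq, dist_comm]
      exact hw1
    have hwB : dist (w:ℂ) B = ρx := by
      rw [← UpperHalfPlane.dist_eq_iff_dist_coe_center_eq, dist_comm]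
      exact hw2
    have hsum : dist (w:ℂ) A + dist A B = dist (w:ℂ) B := by
      rw [hwA, hwB, htan]; ring
    obtain ⟨u, huI, hlin⟩ := dist_add_dist_eq_iff.mp hsum
    have hdl : dist (AffineMap.lineMap (w:ℂ) B u) (w:ℂ) = ‖u‖ * dist (w:ℂ) B :=
      dist_lineMap_left _ _ _
    rw [hlin, dist_comm, hwA, hwB] at hdl
    have habs : ‖u‖ = u := by rw [Real.norm_eq_abs, abs_of_nonneg huI.1]
    rw [habs] at hdl
    have hu : u = t := by rw [ht_def, hdl]; field_simp
    have hlin' : A = (w:ℂ) + ((u:ℝ):ℂ) * (B - (w:ℂ)) := by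
      rw [← hlin, AffineMap.lineMap_apply]
      simp [Complex.real_smul]
      ring
    rw [hlin', hu]
    push_cast
    ring
  have e1 := key y (by rw [h1]) (by rw [h2])
  have e2 := key (refl c x) (dist_refl_center c x)
      (by rw [dist_refl_double c x, dist_comm x c])
  have hne : ((1 - t : ℝ):ℂ) ≠ 0 := by
    simp only [ne_eq, Complex.ofReal_eq_zero]
    intro h; linarith [h]
  apply UpperHalfPlane.ext
  have := e1.trans e2.symm
  exact mul_left_cancel₀ hne this

end PtRefl

/-- A point reflection of the hyperbolic plane at `c`: an involutive isometry whose
unique fixed point is `c`. -/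
def IsPointReflection (f : ℍ ≃ᵢ ℍ) (c : ℍ) : Prop :=
  (∀ x, f (f x) = x) ∧ (∀ x, f x = x ↔ x = c)

namespace PtRefl

lemma eq_refl_of_isPointReflection {f : ℍ ≃ᵢ ℍ} {c : ℍ}
    (hf : IsPointReflection f c) (x : ℍ) : f x = refl c x := by
  have hfc : f c = c := (hf.2 c).mpr rfl
  rcases eq_or_ne x c with rfl | hx
  · rw [refl_self]; exact hfc
  · have hxy : x ≠ f x := fun h => hx ((hf.2 x).mp h.symm)
    obtain ⟨m, hm1, hm2⟩ := exists_midpoint x (f x)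
    have hfm1 : dist x (f m) = dist x (f x) / 2 := by
      calc dist x (f m) = dist (f (f x)) (f m) := by rw [hf.1 x]
        _ = dist (f x) m := f.dist_eq _ _
        _ = dist m (f x) := dist_comm _ _
        _ = dist x (f x) / 2 := hm2
    have hfm2 : dist (f m) (f x) = dist x (f x) / 2 := by
      calc dist (f m) (f x) = dist m x := f.dist_eq _ _
        _ = dist x m := dist_comm _ _
        _ = dist x (f x) / 2 := hm1
    have hfmm : f m = m := midpoint_unique hxy hfm1 hfm2 hm1 hm2
    have hmc : m = c := (hf.2 m).mp hfmm
    rw [hmc] at hm1 hm2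
    apply eq_refl_of_dists hx
    · rw [hm2, dist_comm c x, hm1]
    · have : dist x c = dist x (f x) / 2 := hm1
      rw [dist_comm c x, this]; ring


lemma isBounded_of_controls (S : Set ℍ) (w : ℍ) (ε R : ℝ) (hε : 0 < ε)
    (h : ∀ z ∈ S, ε ≤ z.im ∧ dist (z : ℂ) (w : ℂ) ≤ R) : Bornology.IsBounded S := by
  have hw := w.im_pos
  have hs0 : 0 < Real.sqrt (ε * w.im) := Real.sqrt_pos.mpr (by positivity)
  have hsub : S ⊆ Metric.closedBall w (max R 0 / Real.sqrt (ε * w.im)) := by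
    intro z hz
    obtain ⟨h1, h2⟩ := h z hz
    have h3 := UpperHalfPlane.dist_le_dist_coe_div_sqrt z w
    have hs1 : Real.sqrt (ε * w.im) ≤ Real.sqrt (z.im * w.im) :=
      Real.sqrt_le_sqrt (by nlinarith)
    have h4 : dist (z : ℂ) (w : ℂ) / Real.sqrt (z.im * w.im)
        ≤ max R 0 / Real.sqrt (ε * w.im) :=
      div_le_div₀ (le_max_right R 0) (h2.trans (le_max_left R 0)) hs0 hs1
    exact Metric.mem_closedBall.mpr (h3.trans h4)
  exact Metric.isBounded_closedBall.subset hsub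

/-- points of `S` lie on the circle and have bounded real part: bounded. -/
lemma circle_bounded (m rsq : ℝ) (hrsq : 0 < rsq) (c : ℍ)
    (hcirc : (c.re - m) ^ 2 + c.im ^ 2 = rsq) (S : Set ℍ)
    (h : ∀ z ∈ S, ((z.re - m) ^ 2 + z.im ^ 2 - rsq = 0) ∧
      (z.re - m) ^ 2 * ((c.re - m) ^ 2 + rsq) ^ 2 ≤ 4 * (c.re - m) ^ 2 * rsq ^ 2) :
    Bornology.IsBounded S := by
  have hb := c.im_pos
  set k : ℝ := c.re - m with hk
  have hk2 : k ^ 2 < rsq := by nlinarith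
  have hden : 0 < k ^ 2 + rsq := by positivity
  set γsq : ℝ := 4 * k ^ 2 * rsq ^ 2 / (k ^ 2 + rsq) ^ 2 with hγ
  have hεsq : rsq - γsq = rsq * (k ^ 2 - rsq) ^ 2 / (k ^ 2 + rsq) ^ 2 := by
    rw [hγ]; field_simp; ring
  have hεpos : 0 < rsq - γsq := by
    rw [hεsq]
    have : (k ^ 2 - rsq) ≠ 0 := by intro h0; nlinarith
    positivity
  apply isBounded_of_controls S c (Real.sqrt (rsq - γsq)) (Real.sqrt (4 * rsq))
    (Real.sqrt_pos.mpr hεpos)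
  intro z hz
  obtain ⟨honc, hb2⟩ := h z hz
  have hq := z.im_pos
  have hu2 : (z.re - m) ^ 2 ≤ γsq := by
    rw [hγ, le_div_iff₀ (by positivity)]
    nlinarith
  constructor
  · have h1 : rsq - γsq ≤ z.im ^ 2 := by nlinarith
    calc Real.sqrt (rsq - γsq) ≤ Real.sqrt (z.im ^ 2) := Real.sqrt_le_sqrt h1
      _ = z.im := by rw [Real.sqrt_sq hq.le]
  · have hsq : dist (z : ℂ) (c : ℂ) ^ 2 ≤ 4 * rsq := by
      rw [distC_sq, coe_re, coe_re, coe_im, coe_im]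
      have e1 : (z.re - m) ^ 2 ≤ rsq := by nlinarith
      have e2 : k ^ 2 ≤ rsq := hk2.le
      have e3 : 0 < z.im * c.im := mul_pos hq hb
      have e4 : (z.re - c.re) ^ 2 = ((z.re - m) - k) ^ 2 := by rw [hk]; ring
      nlinarith [sq_nonneg ((z.re - m) + k), e4, e3, honc, hcirc]
    calc dist (z : ℂ) (c : ℂ) = Real.sqrt (dist (z : ℂ) (c : ℂ) ^ 2) :=
          (Real.sqrt_sq dist_nonneg).symm
      _ ≤ Real.sqrt (4 * rsq) := Real.sqrt_le_sqrt hsq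

lemma vertical_case (c₁ c₂ : ℍ) (hre : c₂.re = c₁.re) :
    ∃ A₁ A₂ : Set ℍ, @MeasurableSet ℍ (borel ℍ) A₁ ∧ @MeasurableSet ℍ (borel ℍ) A₂ ∧
      A₁ ∪ A₂ = univ ∧ A₁ ∩ A₂ = ∅ ∧
      ∀ (f : ℍ ≃ᵢ ℍ) (c : ℍ), (c = c₁ ∨ c = c₂) → IsPointReflection f c →
        ∀ S : Set ℍ, (S ⊆ A₁ ∨ S ⊆ A₂) → f '' S = S → Bornology.IsBounded S := by
  letI : MeasurableSpace ℍ := borel ℍ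
  haveI : BorelSpace ℍ := ⟨rfl⟩
  set a₀ : ℝ := c₁.re with ha₀
  set A₁ : Set ℍ := {z : ℍ | a₀ < z.re ∨ (z.re = a₀ ∧ 1 ≤ z.im)} with hA₁
  set A₂ : Set ℍ := {z : ℍ | z.re < a₀ ∨ (z.re = a₀ ∧ z.im < 1)} with hA₂
  have hmre : Measurable (UpperHalfPlane.re) := UpperHalfPlane.continuous_re.measurable
  have hmim : Measurable (UpperHalfPlane.im) := UpperHalfPlane.continuous_im.measurable
  refine ⟨A₁, A₂, ?_, ?_, ?_, ?_, ?_⟩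
  · rw [hA₁]
    simp only [Set.setOf_or, Set.setOf_and]
    exact (measurableSet_lt measurable_const hmre).union
      ((hmre (measurableSet_singleton a₀)).inter (measurableSet_le measurable_const hmim))
  · rw [hA₂]
    simp only [Set.setOf_or, Set.setOf_and]
    exact (measurableSet_lt hmre measurable_const).union
      ((hmre (measurableSet_singleton a₀)).inter (measurableSet_lt hmim measurable_const))
  · ext z
    simp only [hA₁, hA₂, mem_union, mem_setOf_eq, mem_univ, iff_true]
    rcases lt_trichotomy a₀ z.re with h | h | h
    · exact Or.inl (Or.inl h)
    · rcases le_or_gt 1 z.im with h' | h'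
      · exact Or.inl (Or.inr ⟨h.symm, h'⟩)
      · exact Or.inr (Or.inr ⟨h.symm, h'⟩)
    · exact Or.inr (Or.inl h)
  · rw [eq_empty_iff_forall_notMem]
    rintro z ⟨h1 | ⟨e1, i1⟩, h2 | ⟨e2, i2⟩⟩ <;> simp_all <;> linarith
  · intro f c hc hf S hsub hfS
    have hb := c.im_pos
    have hcre : c.re = a₀ := by
      rcases hc with rfl | rfl
      exacts [ha₀.symm, hre]
    have hmem : ∀ z ∈ S, f z ∈ S := fun z hz => by rw [← hfS]; exact mem_image_of_mem f hz
    have hfz : ∀ z : ℍ, f z = refl c z := eq_refl_of_isPointReflection hf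
    have hDpos : ∀ z : ℍ, (0:ℝ) < (z.re - c.re) ^ 2 + z.im ^ 2 := fun z => by
      have := z.im_pos; positivity
    -- re sign flip
    have hflip : ∀ z : ℍ, a₀ < z.re → (refl c z).re < a₀ := by
      intro z hz
      have hD := hDpos z
      have hpos : 0 < c.im ^ 2 * (z.re - c.re) / ((z.re - c.re) ^ 2 + z.im ^ 2) := by
        have h1 : 0 < z.re - c.re := by rw [hcre]; linarith
        positivity
      rw [refl_re, hcre] at *
      linarith
    have hflip' : ∀ z : ℍ, z.re < a₀ → a₀ < (refl c z).re := by
      intro z hz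
      have hD := hDpos z
      have hneg : c.im ^ 2 * (z.re - c.re) / ((z.re - c.re) ^ 2 + z.im ^ 2) < 0 := by
        apply div_neg_of_neg_of_pos _ hD
        have h1 : z.re - c.re < 0 := by rw [hcre]; linarith
        exact mul_neg_of_pos_of_neg (pow_pos hb 2) h1
      rw [refl_re, hcre] at *
      linarith
    have honline : ∀ z : ℍ, z.re = a₀ →
        (refl c z).re = a₀ ∧ (refl c z).im = c.im ^ 2 / z.im := by
      intro z hz
      have hq := z.im_pos
      have hp : z.re - c.re = 0 := by rw [hcre, hz]; ring
      constructor
      · rw [refl_re, hp, hcre]; simp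
      · rw [refl_im, hp]
        field_simp
        ring
    rcases hsub with h1 | h2
    · -- S inside A₁
      have hline : ∀ z ∈ S, z.re = a₀ ∧ 1 ≤ z.im ∧ z.im ≤ c.im ^ 2 := by
        intro z hz
        have hfzS : f z ∈ S := hmem z hz
        have hfzA : refl c z ∈ A₁ := by rw [← hfz]; exact h1 hfzS
        rcases h1 hz with hgt | ⟨he, hi⟩
        · exfalso
          have := hflip z hgt
          rcases hfzA with h' | ⟨h', _⟩ <;> [linarith; exact absurd h' (by linarith)]
        · obtain ⟨hrre, hrim⟩ := honline z he
          rcases hfzA with h' | ⟨_, h'⟩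
          · exfalso; rw [hrre] at h'; exact lt_irrefl _ h'
          · rw [hrim] at h'
            have hh := (le_div_iff₀ z.im_pos).mp h'
            exact ⟨he, hi, by linarith⟩
      apply isBounded_of_controls S c 1 (c.im ^ 2 + c.im) one_pos
      intro z hz
      obtain ⟨he, hi1, hi2⟩ := hline z hz
      refine ⟨hi1, ?_⟩
      have hre' : (z:ℂ).re = (c:ℂ).re := by rw [coe_re, coe_re, he, hcre]
      rw [Complex.dist_of_re_eq hre', coe_im, coe_im, Real.dist_eq]
      rw [abs_le]
      constructor <;> nlinarith
    · -- S inside A₂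
      have hline : ∀ z ∈ S, z.re = a₀ ∧ z.im < 1 ∧ c.im ^ 2 ≤ z.im := by
        intro z hz
        have hfzS : f z ∈ S := hmem z hz
        have hfzA : refl c z ∈ A₂ := by rw [← hfz]; exact h2 hfzS
        rcases h2 hz with hlt | ⟨he, hi⟩
        · exfalso
          have := hflip' z hlt
          rcases hfzA with h' | ⟨h', _⟩ <;> [linarith; exact absurd h' (by linarith)]
        · obtain ⟨hrre, hrim⟩ := honline z he
          rcases hfzA with h' | ⟨_, h'⟩
          · exfalso; rw [hrre] at h'; exact lt_irrefl _ h'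
          · rw [hrim] at h'
            have hh := (div_lt_iff₀ z.im_pos).mp h'
            exact ⟨he, hi, by nlinarith⟩
      apply isBounded_of_controls S c (c.im ^ 2) (1 + c.im) (by positivity)
      intro z hz
      obtain ⟨he, hi1, hi2⟩ := hline z hz
      refine ⟨hi2, ?_⟩
      have hre' : (z:ℂ).re = (c:ℂ).re := by rw [coe_re, coe_re, he, hcre]
      rw [Complex.dist_of_re_eq hre', coe_im, coe_im, Real.dist_eq]
      rw [abs_le]
      constructor <;> nlinarith [z.im_pos]


lemma circle_case (c₁ c₂ : ℍ) (hre : c₁.re ≠ c₂.re) :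
    ∃ A₁ A₂ : Set ℍ, @MeasurableSet ℍ (borel ℍ) A₁ ∧ @MeasurableSet ℍ (borel ℍ) A₂ ∧
      A₁ ∪ A₂ = univ ∧ A₁ ∩ A₂ = ∅ ∧
      ∀ (f : ℍ ≃ᵢ ℍ) (c : ℍ), (c = c₁ ∨ c = c₂) → IsPointReflection f c →
        ∀ S : Set ℍ, (S ⊆ A₁ ∨ S ⊆ A₂) → f '' S = S → Bornology.IsBounded S := by
  letI : MeasurableSpace ℍ := borel ℍ
  haveI : BorelSpace ℍ := ⟨rfl⟩
  have hb₁ := c₁.im_pos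
  have hb₂ := c₂.im_pos
  obtain ⟨m, hm⟩ : ∃ m : ℝ, m = (c₁.re ^ 2 + c₁.im ^ 2 - c₂.re ^ 2 - c₂.im ^ 2)
      / (2 * (c₁.re - c₂.re)) := ⟨_, rfl⟩
  obtain ⟨rsq, hrsq_def⟩ : ∃ r : ℝ, r = (c₁.re - m) ^ 2 + c₁.im ^ 2 := ⟨_, rfl⟩
  have hrsq : 0 < rsq := by rw [hrsq_def]; positivity
  have hc₁ : (c₁.re - m) ^ 2 + c₁.im ^ 2 = rsq := hrsq_def.symm
  have hc₂ : (c₂.re - m) ^ 2 + c₂.im ^ 2 = rsq := by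
    rw [hrsq_def, hm]
    have hne : c₁.re - c₂.re ≠ 0 := sub_ne_zero.mpr hre
    field_simp
    ring
  set σ : ℍ → ℝ := fun z => (z.re - m) ^ 2 + z.im ^ 2 - rsq with hσ
  have hmσ : Measurable σ := by
    apply Measurable.sub _ measurable_const
    apply Measurable.add
    · exact ((UpperHalfPlane.continuous_re.measurable).sub measurable_const).pow_const 2
    · exact (UpperHalfPlane.continuous_im.measurable).pow_const 2
  have hmre : Measurable (UpperHalfPlane.re) := UpperHalfPlane.continuous_re.measurable
  set A₁ : Set ℍ := {z : ℍ | 0 < σ z ∨ (σ z = 0 ∧ m ≤ z.re)} with hA₁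
  set A₂ : Set ℍ := {z : ℍ | σ z < 0 ∨ (σ z = 0 ∧ z.re < m)} with hA₂
  refine ⟨A₁, A₂, ?_, ?_, ?_, ?_, ?_⟩
  · rw [hA₁]
    simp only [Set.setOf_or, Set.setOf_and]
    exact (measurableSet_lt measurable_const hmσ).union
      ((hmσ (measurableSet_singleton 0)).inter (measurableSet_le measurable_const hmre))
  · rw [hA₂]
    simp only [Set.setOf_or, Set.setOf_and]
    exact (measurableSet_lt hmσ measurable_const).union
      ((hmσ (measurableSet_singleton 0)).inter (measurableSet_lt hmre measurable_const))
  · ext z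
    simp only [hA₁, hA₂, mem_union, mem_setOf_eq, mem_univ, iff_true]
    rcases lt_trichotomy 0 (σ z) with h | h | h
    · exact Or.inl (Or.inl h)
    · rcases le_or_gt m z.re with h' | h'
      · exact Or.inl (Or.inr ⟨h.symm, h'⟩)
      · exact Or.inr (Or.inr ⟨h.symm, h'⟩)
    · exact Or.inr (Or.inl h)
  · rw [eq_empty_iff_forall_notMem]
    rintro z ⟨h1 | ⟨e1, i1⟩, h2 | ⟨e2, i2⟩⟩ <;> simp_all <;> linarith
  · intro f c hc hf S hsub hfS
    have hb := c.im_pos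
    have hcirc : (c.re - m) ^ 2 + c.im ^ 2 = rsq := by
      rcases hc with rfl | rfl
      exacts [hc₁, hc₂]
    have hmem : ∀ z ∈ S, f z ∈ S := fun z hz => by rw [← hfS]; exact mem_image_of_mem f hz
    have hfz : ∀ z : ℍ, f z = refl c z := eq_refl_of_isPointReflection hf
    have hDpos : ∀ z : ℍ, (0:ℝ) < (z.re - c.re) ^ 2 + z.im ^ 2 := fun z => by
      have := z.im_pos; positivity
    -- key algebraic identities
    have hreD : ∀ z : ℍ, ((refl c z).re - m) * ((z.re - c.re) ^ 2 + z.im ^ 2)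
        = (c.re - m) * ((z.re - c.re) ^ 2 + z.im ^ 2) - c.im ^ 2 * (z.re - c.re) := by
      intro z
      have hD := hDpos z
      rw [refl_re]
      field_simp
      ring
    have himD : ∀ z : ℍ, (refl c z).im * ((z.re - c.re) ^ 2 + z.im ^ 2) = c.im ^ 2 * z.im := by
      intro z
      have hD := hDpos z
      rw [refl_im]
      field_simp
    have hflip : ∀ z : ℍ, σ (refl c z) * ((z.re - c.re) ^ 2 + z.im ^ 2) ^ 2
        = -(c.im ^ 2) * σ z * ((z.re - c.re) ^ 2 + z.im ^ 2) := by
      intro z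
      have e0 : σ (refl c z) * ((z.re - c.re) ^ 2 + z.im ^ 2) ^ 2
          = (((refl c z).re - m) * ((z.re - c.re) ^ 2 + z.im ^ 2)) ^ 2
            + ((refl c z).im * ((z.re - c.re) ^ 2 + z.im ^ 2)) ^ 2
            - rsq * ((z.re - c.re) ^ 2 + z.im ^ 2) ^ 2 := by
        rw [hσ]; ring
      rw [e0, hreD z, himD z, hσ]
      linear_combination (((z.re - c.re) ^ 2 + z.im ^ 2) ^ 2
        + c.im ^ 2 * ((z.re - c.re) ^ 2 + z.im ^ 2)) * hcirc
    have hσ0 : ∀ z : ℍ, σ z = 0 → σ (refl c z) = 0 := by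
      intro z h0
      have := hflip z
      rw [h0] at this
      have hD := hDpos z
      have h2 : σ (refl c z) * ((z.re - c.re) ^ 2 + z.im ^ 2) ^ 2 = 0 := by linarith [this]
      rcases mul_eq_zero.mp h2 with h | h
      · exact h
      · exact absurd h (by positivity)
    have hkey2 : ∀ z : ℍ, σ z = 0 → ((refl c z).re - m) * ((z.re - c.re) ^ 2 + z.im ^ 2)
        = 2 * (c.re - m) * rsq - (z.re - m) * ((c.re - m) ^ 2 + rsq) := by
      intro z h0
      rw [hσ] at h0
      rw [hreD z]
      linear_combination (c.re - m) * h0 - (z.re - c.re) * hcirc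
    rcases hsub with h1 | h2
    · -- S ⊆ A₁
      apply circle_bounded m rsq hrsq c hcirc
      intro z hz
      have hfzS : f z ∈ S := hmem z hz
      have hfzA : refl c z ∈ A₁ := by rw [← hfz]; exact h1 hfzS
      rcases h1 hz with hpos | ⟨h0, hge⟩
      · exfalso
        have hD := hDpos z
        have hneg : σ (refl c z) < 0 := by
          by_contra h'
          push_neg at h'
          have h2 : 0 ≤ σ (refl c z) * ((z.re - c.re) ^ 2 + z.im ^ 2) ^ 2 :=
            mul_nonneg h' (by positivity)
          nlinarith [hflip z, mul_pos (mul_pos (pow_pos hb 2) hpos) hD]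
        rcases hfzA with h' | ⟨h', _⟩ <;> linarith
      · have h0' : σ (refl c z) = 0 := hσ0 z h0
        have hge' : m ≤ (refl c z).re := by
          rcases hfzA with h' | ⟨_, h'⟩
          · exact absurd h' (by rw [h0']; exact lt_irrefl 0)
          · exact h'
        have hk2' := hkey2 z h0
        have hD := hDpos z
        have hineq : 0 ≤ 2 * (c.re - m) * rsq - (z.re - m) * ((c.re - m) ^ 2 + rsq) := by
          rw [← hk2']
          have : 0 ≤ (refl c z).re - m := by linarith
          positivity
        have hu0 : 0 ≤ z.re - m := by linarith
        have hden : 0 < (c.re - m) ^ 2 + rsq := by positivity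
        have hprod : 0 ≤ (z.re - m) * ((c.re - m) ^ 2 + rsq) := by positivity
        refine ⟨by rw [hσ] at h0; exact h0, ?_⟩
        have hB : (z.re - m) * ((c.re - m) ^ 2 + rsq) ≤ 2 * (c.re - m) * rsq := by linarith
        calc (z.re - m) ^ 2 * ((c.re - m) ^ 2 + rsq) ^ 2
            = ((z.re - m) * ((c.re - m) ^ 2 + rsq)) ^ 2 := by ring
          _ ≤ (2 * (c.re - m) * rsq) ^ 2 := pow_le_pow_left₀ hprod hB 2
          _ = 4 * (c.re - m) ^ 2 * rsq ^ 2 := by ring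
    · -- S ⊆ A₂
      apply circle_bounded m rsq hrsq c hcirc
      intro z hz
      have hfzS : f z ∈ S := hmem z hz
      have hfzA : refl c z ∈ A₂ := by rw [← hfz]; exact h2 hfzS
      rcases h2 hz with hneg | ⟨h0, hlt⟩
      · exfalso
        have hD := hDpos z
        have hpos : 0 < σ (refl c z) := by
          by_contra h'
          push_neg at h'
          have h2' : σ (refl c z) * ((z.re - c.re) ^ 2 + z.im ^ 2) ^ 2 ≤ 0 :=
            mul_nonpos_iff.mpr (Or.inr ⟨h', by positivity⟩)
          nlinarith [hflip z, mul_pos (mul_pos (pow_pos hb 2) (neg_pos.mpr hneg)) hD]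
        rcases hfzA with h' | ⟨h', _⟩ <;> linarith
      · have h0' : σ (refl c z) = 0 := hσ0 z h0
        have hlt' : (refl c z).re < m := by
          rcases hfzA with h' | ⟨_, h'⟩
          · exact absurd h' (by rw [h0']; exact lt_irrefl 0)
          · exact h'
        have hk2' := hkey2 z h0
        have hD := hDpos z
        have hineq : 2 * (c.re - m) * rsq - (z.re - m) * ((c.re - m) ^ 2 + rsq) < 0 := by
          rw [← hk2']
          have hlt'' : (refl c z).re - m < 0 := by linarith
          exact mul_neg_of_neg_of_pos hlt'' hD
        have hu0 : z.re - m < 0 := by linarith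
        have hden : 0 < (c.re - m) ^ 2 + rsq := by positivity
        have hprod : (z.re - m) * ((c.re - m) ^ 2 + rsq) < 0 := mul_neg_of_neg_of_pos hu0 hden
        refine ⟨by rw [hσ] at h0; exact h0, ?_⟩
        have ha1 : 0 ≤ -((z.re - m) * ((c.re - m) ^ 2 + rsq)) := by linarith
        have ha2 : -((z.re - m) * ((c.re - m) ^ 2 + rsq)) ≤ -(2 * (c.re - m) * rsq) := by linarith
        calc (z.re - m) ^ 2 * ((c.re - m) ^ 2 + rsq) ^ 2
            = (-((z.re - m) * ((c.re - m) ^ 2 + rsq))) ^ 2 := by ring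
          _ ≤ (-(2 * (c.re - m) * rsq)) ^ 2 := pow_le_pow_left₀ ha1 ha2 2
          _ = 4 * (c.re - m) ^ 2 * rsq ^ 2 := by ring


end PtRefl

end

/-- For any two points `c₁, c₂` of the hyperbolic plane there is a Borel partition
`ℍ = A₁ ∪ A₂` such that neither piece contains an unbounded subset symmetric with
respect to `c₁` or `c₂`. -/
theorem exists_borel_two_partition_avoiding_two_centers (c₁ c₂ : ℍ) :
    ∃ A₁ A₂ : Set ℍ, @MeasurableSet ℍ (borel ℍ) A₁ ∧ @MeasurableSet ℍ (borel ℍ) A₂ ∧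
      A₁ ∪ A₂ = univ ∧ A₁ ∩ A₂ = ∅ ∧
      ∀ (f : ℍ ≃ᵢ ℍ) (c : ℍ), (c = c₁ ∨ c = c₂) → IsPointReflection f c →
        ∀ S : Set ℍ, (S ⊆ A₁ ∨ S ⊆ A₂) → f '' S = S → Bornology.IsBounded S := by
  rcases eq_or_ne c₂.re c₁.re with h | h
  · exact PtRefl.vertical_case c₁ c₂ h
  · exact PtRefl.circle_case c₁ c₂ (fun he => h he.symm)
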